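/- A monomial ∏_{i=1}^{n-1} x_i^{c_i} does not lie in the G-parking function ideal I if and only if c = (c_1,...,c_{n-1}) is a G-parking function with respect to the sink v_n. -/

import Mathlib

open SimpleGraph
open scoped Classical

/-- A loopless multigraph on vertex type `V` with edge labels `E`. -/
structure MG (V : Type*) (E : Type*) where
  ends : E → Sym2 V
  no_loop : ∀ e, ¬ (ends e).IsDiag

variable {V E : Type*} [Fintype V] [DecidableEq V] [Fintype E]

/-- The underlying adjacency (simple) graph of a multigraph. -/
def MG.adjGraph (G : MG V E) : SimpleGraph V :=
  SimpleGraph.fromRel (fun u v => ∃ e, G.ends e = s(u, v))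

/-- `π` is a connected partition: every block induces a connected subgraph. -/
def ConnPart (H : SimpleGraph V) (π : Setoid V) : Prop :=
  ∀ c ∈ π.classes, (H.induce c).Connected

/-- `d_U(u)`: the number of edges joining `u` to a vertex outside `U`. -/
noncomputable def dU (G : MG V E) (U : Set V) (u : V) : ℕ :=
  Nat.card {e : E // ∃ w, w ∉ U ∧ G.ends e = s(u, w)}

/-- `{U, Uᶜ}` is a connected cut: both sides induce connected subgraphs. -/
def ConnCut (G : MG V E) (U : Set V) : Prop :=
  (G.adjGraph.induce U).Connected ∧ (G.adjGraph.induce Uᶜ).Connected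

/-- The monomial `x^C = ∏_{u ∈ U} x_u^{d_U(u)}` attached to the cut
`C = {U, Uᶜ}` with sink `s ∈ Uᶜ`, in `k[x_u : u ≠ s]`. -/
noncomputable def xC (k : Type*) [Field k] (G : MG V E) (s : V) (U : Set V) :
    MvPolynomial {v : V // v ≠ s} k :=
  MvPolynomial.monomial
    (Finsupp.equivFunOnFinite.symm
      fun u : {v : V // v ≠ s} => if (u : V) ∈ U then dU G U u else 0) 1

/-- The `G`-parking function ideal: generated by `x^C` for `C` a connected cut. -/
noncomputable def parkIdeal (k : Type*) [Field k] (G : MG V E) (s : V) :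
    Ideal (MvPolynomial {v : V // v ≠ s} k) :=
  Ideal.span {p | ∃ U : Set V, s ∉ U ∧ ConnCut G U ∧ p = xC k G s U}

/-- `c` is a `G`-parking function with respect to the sink `s`. -/
def IsParking (G : MG V E) (s : V) (c : {v : V // v ≠ s} → ℕ) : Prop :=
  ∀ U : Set V, U.Nonempty → s ∉ U →
    ∃ u, ∃ hu : u ∈ U, ∃ h : u ≠ s, c ⟨u, h⟩ < dU G U u

/-! ### Auxiliary lemmas -/

lemma MG.adj_of_edge (G : MG V E) {e : E} {u w : V} (h : G.ends e = s(u, w)) :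
    G.adjGraph.Adj u w := by
  have hne : u ≠ w := by
    intro huw
    exact G.no_loop e (by rw [h, ← huw]; exact Sym2.mk_isDiag_iff.mpr rfl)
  exact (SimpleGraph.fromRel_adj _ u w).mpr ⟨hne, Or.inl ⟨e, h⟩⟩

/-- The set of vertices joined to `a` by a walk staying inside `A`. -/
def wcomp {V : Type*} (H : SimpleGraph V) (A : Set V) (a : V) : Set V :=
  {v | ∃ p : H.Walk a v, ∀ x ∈ p.support, x ∈ A}

lemma wcomp_subset {V : Type*} (H : SimpleGraph V) (A : Set V) (a : V) :
    wcomp H A a ⊆ A := fun _v ⟨p, hp⟩ => hp _ p.end_mem_support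

lemma mem_wcomp_self {V : Type*} {H : SimpleGraph V} {A : Set V} {a : V} (ha : a ∈ A) :
    a ∈ wcomp H A a :=
  ⟨SimpleGraph.Walk.nil, by simp [ha]⟩

lemma wcomp_closed {V : Type*} {H : SimpleGraph V} {A : Set V} {a v w : V}
    (hv : v ∈ wcomp H A a) (h : H.Adj v w) (hw : w ∈ A) : w ∈ wcomp H A a := by
  obtain ⟨p, hp⟩ := hv
  refine ⟨p.concat h, fun x hx => ?_⟩
  rw [SimpleGraph.Walk.support_concat] at hx
  rcases List.mem_append.mp hx with h1 | h1
  · exact hp x h1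
  · rw [List.mem_singleton] at h1
    exact h1 ▸ hw

lemma wcomp_trans {V : Type*} {H : SimpleGraph V} {A : Set V} {a v x : V}
    (hx : x ∈ wcomp H A a) (hxv : x ∈ wcomp H A v) : v ∈ wcomp H A a := by
  obtain ⟨p, hp⟩ := hx
  obtain ⟨q, hq⟩ := hxv
  refine ⟨p.append q.reverse, fun y hy => ?_⟩
  rcases (SimpleGraph.Walk.mem_support_append_iff _ _).mp hy with h | h
  · exact hp y h
  · exact hq y (by rwa [SimpleGraph.Walk.support_reverse, List.mem_reverse] at h)

lemma wcomp_connected {V : Type*} [DecidableEq V] {H : SimpleGraph V} {A : Set V} {a : V}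
    (ha : a ∈ A) : (H.induce (wcomp H A a)).Connected := by
  apply SimpleGraph.induce_connected_of_patches a (mem_wcomp_self ha)
  intro v hv
  obtain ⟨p, hp⟩ := hv
  refine ⟨{x | x ∈ p.support}, ?_, p.start_mem_support, p.end_mem_support, ?_⟩
  · intro x hx
    exact ⟨p.takeUntil x hx, fun y hy =>
      hp y (SimpleGraph.Walk.support_takeUntil_subset p hx hy)⟩
  · exact p.connected_induce_support.preconnected _ _

lemma dU_congr (G : MG V E) {U U' : Set V} {u : V}
    (h : ∀ e : E, (∃ w, w ∉ U ∧ G.ends e = s(u, w)) ↔ ∃ w, w ∉ U' ∧ G.ends e = s(u, w)) :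
    dU G U u = dU G U' u :=
  Nat.card_congr (Equiv.subtypeEquivRight h)

lemma dU_anti (G : MG V E) {U U' : Set V} (h : U ⊆ U') (u : V) :
    dU G U' u ≤ dU G U u := by
  apply Nat.card_le_card_of_injective
    (fun x : {e : E // ∃ w, w ∉ U' ∧ G.ends e = s(u, w)} =>
      (⟨x.1, by
        obtain ⟨w, hw, he⟩ := x.2
        exact ⟨w, fun hwU => hw (h hwU), he⟩⟩ :
      {e : E // ∃ w, w ∉ U ∧ G.ends e = s(u, w)}))
  intro x y hxy
  simpa [Subtype.ext_iff] using hxy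

lemma dU_eq_zero (G : MG V E) {U : Set V} {u : V}
    (h : ∀ e : E, ¬ ∃ w, w ∉ U ∧ G.ends e = s(u, w)) : dU G U u = 0 := by
  have : IsEmpty {e : E // ∃ w, w ∉ U ∧ G.ends e = s(u, w)} := ⟨fun x => h x.1 x.2⟩
  exact Nat.card_of_isEmpty

/-- A monomial `∏ x_i^{c_i}` does not lie in the `G`-parking function ideal iff
`c` is a `G`-parking function with respect to the sink. -/
theorem stmt_8 (k : Type*) [Field k] (G : MG V E) (hG : G.adjGraph.Connected)
    (s : V) (c : {v : V // v ≠ s} → ℕ) :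
    MvPolynomial.monomial (Finsupp.equivFunOnFinite.symm c) (1 : k) ∉
        parkIdeal k G s ↔
      IsParking G s c := by
  classical
  have hset : {p : MvPolynomial {v : V // v ≠ s} k |
        ∃ U : Set V, s ∉ U ∧ ConnCut G U ∧ p = xC k G s U} =
      (fun d => MvPolynomial.monomial d (1 : k)) ''
        {d | ∃ U : Set V, s ∉ U ∧ ConnCut G U ∧
          d = Finsupp.equivFunOnFinite.symm
            fun u : {v : V // v ≠ s} => if (u : V) ∈ U then dU G U u else 0} := by
    ext p
    constructor
    · rintro ⟨U, h1, h2, rfl⟩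
      exact ⟨_, ⟨U, h1, h2, rfl⟩, rfl⟩
    · rintro ⟨d, ⟨U, h1, h2, rfl⟩, rfl⟩
      exact ⟨U, h1, h2, rfl⟩
  have hmem : (MvPolynomial.monomial (Finsupp.equivFunOnFinite.symm c) (1 : k) ∈
        parkIdeal k G s) ↔
      ∃ U : Set V, s ∉ U ∧ ConnCut G U ∧
        ∀ u : {v : V // v ≠ s}, (if (u : V) ∈ U then dU G U u else 0) ≤ c u := by
    rw [parkIdeal, hset, MvPolynomial.mem_ideal_span_monomial_image,
      MvPolynomial.support_monomial, if_neg (one_ne_zero : (1 : k) ≠ 0)]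
    simp only [Finset.mem_singleton, forall_eq]
    constructor
    · rintro ⟨d, ⟨U, h1, h2, rfl⟩, hle⟩
      refine ⟨U, h1, h2, fun u => ?_⟩
      have := (Finsupp.le_def.mp hle) u
      simpa using this
    · rintro ⟨U, h1, h2, hle⟩
      refine ⟨_, ⟨U, h1, h2, rfl⟩, Finsupp.le_def.mpr fun u => by simpa using hle u⟩
  rw [hmem]
  constructor
  · -- no divisor ⇒ parking
    intro hni
    by_contra hcon
    unfold IsParking at hcon
    push_neg at hcon
    obtain ⟨U, hUne, hsU, hcon⟩ := hcon
    obtain ⟨u₀, hu₀⟩ := hUne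
    set H := G.adjGraph with hH
    set U₁ : Set V := wcomp H U u₀ with hU₁
    have hU₁sub : U₁ ⊆ U := wcomp_subset H U u₀
    have hu₀U₁ : u₀ ∈ U₁ := mem_wcomp_self hu₀
    have hdU₁ : ∀ u ∈ U₁, dU G U₁ u = dU G U u := by
      intro u huU₁
      apply dU_congr
      intro e
      constructor
      · rintro ⟨w, hw, he⟩
        exact ⟨w, fun hwU => hw (wcomp_closed huU₁ (G.adj_of_edge he) hwU), he⟩
      · rintro ⟨w, hw, he⟩
        exact ⟨w, fun h => hw (hU₁sub h), he⟩
    set W : Set V := U₁ᶜ with hW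
    have hsW : s ∈ W := fun h => hsU (hU₁sub h)
    set W' : Set V := wcomp H W s with hW'
    set U₂ : Set V := W'ᶜ with hU₂
    have hW'W : W' ⊆ W := wcomp_subset H W s
    have hU₁U₂ : U₁ ⊆ U₂ := fun v hv hvW' => (hW'W hvW') hv
    have hsU₂ : s ∉ U₂ := fun h => h (mem_wcomp_self hsW)
    have hU₂c : (H.induce U₂ᶜ).Connected := by
      have : U₂ᶜ = W' := compl_compl W'
      rw [this]
      exact wcomp_connected hsW
    have hU₂conn : (H.induce U₂).Connected := by
      apply SimpleGraph.induce_connected_of_patches u₀ (hU₁U₂ hu₀U₁)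
      intro v hv
      by_cases hvU₁ : v ∈ U₁
      · exact ⟨U₁, hU₁U₂, hu₀U₁, hvU₁, (wcomp_connected hu₀).preconnected _ _⟩
      · have hvW : v ∈ W := hvU₁
        have hvW' : v ∉ W' := hv
        have hCvU₂ : wcomp H W v ⊆ U₂ := by
          intro x hx hxW'
          exact hvW' (wcomp_trans hxW' hx)
        obtain ⟨p⟩ := hG.preconnected v u₀
        have hu₀Cv : u₀ ∉ wcomp H W v := fun h => (wcomp_subset H W v h) hu₀U₁
        obtain ⟨d, _hd, hd1, hd2⟩ :=
          p.exists_boundary_dart (wcomp H W v) (mem_wcomp_self hvW) hu₀Cv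
        have hadj : H.Adj d.fst d.snd := d.adj
        have hdsU₁ : d.snd ∈ U₁ := by
          by_contra hn
          exact hd2 (wcomp_closed hd1 hadj hn)
        refine ⟨wcomp H W v ∪ U₁, Set.union_subset hCvU₂ hU₁U₂,
          Or.inr hu₀U₁, Or.inl (mem_wcomp_self hvW), ?_⟩
        exact (SimpleGraph.connected_induce_union (wcomp_connected hvW).preconnected
          (wcomp_connected hu₀).preconnected hd1 hdsU₁ hadj).preconnected _ _
    refine hni ⟨U₂, hsU₂, ⟨hU₂conn, hU₂c⟩, fun u => ?_⟩
    by_cases huU₂ : (u : V) ∈ U₂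
    · rw [if_pos huU₂]
      by_cases huU₁ : (u : V) ∈ U₁
      · calc dU G U₂ (u : V) ≤ dU G U₁ (u : V) := dU_anti G hU₁U₂ (u : V)
          _ = dU G U (u : V) := hdU₁ _ huU₁
          _ ≤ c u := by simpa using hcon (u : V) (hU₁sub huU₁) u.2
      · have : dU G U₂ (u : V) = 0 := by
          apply dU_eq_zero
          rintro e ⟨w, hw, he⟩
          have hwW' : w ∈ W' := not_not.mp hw
          have huW : (u : V) ∈ W := huU₁
          exact huU₂ (wcomp_closed hwW' (G.adj_of_edge he).symm huW)
        rw [this]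
        exact Nat.zero_le _
    · rw [if_neg huU₂]
      exact Nat.zero_le _
  · -- parking ⇒ no divisor
    rintro hP ⟨U, hsU, ⟨hc1, _hc2⟩, hle⟩
    obtain ⟨⟨u, hu⟩⟩ := hc1.nonempty
    obtain ⟨v, hvU, hvs, hlt⟩ := hP U ⟨u, hu⟩ hsU
    have := hle ⟨v, hvs⟩
    rw [if_pos hvU] at this
    have h2 : dU G U v ≤ c ⟨v, hvs⟩ := this
    omega
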